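/- For any linear operators M, N on a d-dimensional complex Hilbert space, and any complete set of d+1 mutually unbiased bases, the sum over all a ∈ {0,…,d} and b ∈ {0,…,d−1} of ⟨ψ^a_b| M |ψ^a_b⟩⟨ψ^a_b| N |ψ^a_b⟩ equals tr(MN) + (tr M)(tr N). -/

import Mathlib

open Matrix BigOperators

open Finset Complex

lemma sum_mul_sum' {α β : Type*} [Fintype α] [Fintype β] (a : α → ℂ) (b : β → ℂ) :
    (∑ i, a i) * (∑ j, b j) = ∑ x : α × β, a x.1 * b x.2 := by
  rw [Finset.sum_mul_sum]
  exact (Fintype.sum_prod_type (fun x : α × β => a x.1 * b x.2)).symm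

lemma sum4 {n : ℕ} (f g h k : Fin n → ℂ) :
    (∑ m : (Fin n × Fin n) × Fin n × Fin n, f m.1.1 * g m.1.2 * h m.2.1 * k m.2.2)
      = (∑ i, f i) * (∑ j, g j) * (∑ a, h a) * (∑ b, k b) := by
  rw [mul_assoc ((∑ i, f i) * ∑ j, g j), sum_mul_sum' f g, sum_mul_sum' h k, sum_mul_sum']
  exact Finset.sum_congr rfl fun m _ => by ring

lemma sum_fin_ite (n : ℕ) (c : Fin (n+1)) (x w : ℂ) :
    ∑ a : Fin (n+1), (if a = c then x else w) = x + n * w := by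
  have h : ∀ a : Fin (n+1), (if a = c then x else w) = (if a = c then x - w else 0) + w := by
    intro a; by_cases h : a = c <;> simp [h]
  rw [Finset.sum_congr rfl (fun a _ => h a), Finset.sum_add_distrib,
    Finset.sum_ite_eq' Finset.univ c (fun _ => x - w)]
  simp [Finset.card_univ]
  ring

lemma sum_pairs (n : ℕ) (p : Fin (n+1) × Fin n) (x z : ℂ) :
    ∑ q : Fin (n+1) × Fin n, (if q = p then x else if q.1 = p.1 then 0 else z)
      = x + (n:ℂ)^2 * z := by
  rw [Fintype.sum_prod_type]
  have h : ∀ a : Fin (n+1), (∑ b : Fin n, if (a, b) = p then x else if a = p.1 then 0 else z)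
      = if a = p.1 then x else (n:ℂ) * z := by
    intro a
    by_cases ha : a = p.1
    · subst ha
      simp [Prod.ext_iff, Finset.sum_ite_eq']
    · simp [Prod.ext_iff, ha, Finset.sum_const, Finset.card_univ]
  rw [Finset.sum_congr rfl (fun a _ => h a), sum_fin_ite n p.1 x ((n:ℂ)*z)]
  ring

noncomputable def Tq (n : ℕ) (u : Fin (n+1) × Fin n → Fin n → ℂ)
    (m : (Fin n × Fin n) × Fin n × Fin n) : ℂ :=
  ∑ p, u p m.1.1 * (starRingEnd ℂ) (u p m.1.2) * u p m.2.1 * (starRingEnd ℂ) (u p m.2.2)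

noncomputable def Dq (n : ℕ) (m : (Fin n × Fin n) × Fin n × Fin n) : ℂ :=
  (if m.1.1 = m.2.2 ∧ m.1.2 = m.2.1 then 1 else 0) +
  (if m.1.1 = m.1.2 ∧ m.2.1 = m.2.2 then 1 else 0)

section
variable (n : ℕ) (u : Fin (n+1) × Fin n → Fin n → ℂ)

-- abbreviation for the gram value
noncomputable def gq (p q : Fin (n+1) × Fin n) : ℂ := ∑ i, (starRingEnd ℂ) (u p i) * u q i

lemma hTT (hd : (n:ℂ) ≠ 0)
    (hgram : ∀ p q, gq n u p q * gq n u q p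
      = if q = p then 1 else if q.1 = p.1 then 0 else (n:ℂ)⁻¹) :
    ∑ m, Tq n u m * (starRingEnd ℂ) (Tq n u m) = 2 * ((n+1) * n) := by
  have e1 : ∀ m, Tq n u m * (starRingEnd ℂ) (Tq n u m)
      = ∑ r : (Fin (n+1) × Fin n) × (Fin (n+1) × Fin n),
          (u r.1 m.1.1 * (starRingEnd ℂ) (u r.2 m.1.1)) *
          ((starRingEnd ℂ) (u r.1 m.1.2) * u r.2 m.1.2) *
          (u r.1 m.2.1 * (starRingEnd ℂ) (u r.2 m.2.1)) *
          ((starRingEnd ℂ) (u r.1 m.2.2) * u r.2 m.2.2) := by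
    intro m
    unfold Tq
    rw [_root_.map_sum, sum_mul_sum']
    exact Finset.sum_congr rfl fun r _ => by simp only [_root_.map_mul, Complex.conj_conj]; ring
  rw [Finset.sum_congr rfl fun m _ => e1 m, Finset.sum_comm]
  have e2 : ∀ r : (Fin (n+1) × Fin n) × (Fin (n+1) × Fin n),
      (∑ m : (Fin n × Fin n) × Fin n × Fin n,
          (u r.1 m.1.1 * (starRingEnd ℂ) (u r.2 m.1.1)) *
          ((starRingEnd ℂ) (u r.1 m.1.2) * u r.2 m.1.2) *
          (u r.1 m.2.1 * (starRingEnd ℂ) (u r.2 m.2.1)) *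
          ((starRingEnd ℂ) (u r.1 m.2.2) * u r.2 m.2.2))
      = (gq n u r.1 r.2 * gq n u r.2 r.1)^2 := by
    intro r
    rw [sum4 (fun i => u r.1 i * (starRingEnd ℂ) (u r.2 i))
      (fun j => (starRingEnd ℂ) (u r.1 j) * u r.2 j)
      (fun a => u r.1 a * (starRingEnd ℂ) (u r.2 a))
      (fun b => (starRingEnd ℂ) (u r.1 b) * u r.2 b)]
    have hA : (∑ i, u r.1 i * (starRingEnd ℂ) (u r.2 i)) = gq n u r.2 r.1 := by
      unfold gq; exact Finset.sum_congr rfl fun i _ => by ring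
    have hB : (∑ i, (starRingEnd ℂ) (u r.1 i) * u r.2 i) = gq n u r.1 r.2 := rfl
    rw [hA, hB]
    ring
  rw [Finset.sum_congr rfl fun r _ => e2 r,
    Fintype.sum_prod_type (fun r : (Fin (n+1) × Fin n) × (Fin (n+1) × Fin n) => (gq n u r.1 r.2 * gq n u r.2 r.1)^2)]
  have e3 : ∀ p, ∑ q, (gq n u p q * gq n u q p)^2 = 2 := by
    intro p
    have h4 : ∀ q, (gq n u p q * gq n u q p)^2
        = (if q = p then 1 else if q.1 = p.1 then 0 else ((n:ℂ)⁻¹)^2) := by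
      intro q
      rw [hgram]
      by_cases h1 : q = p
      · simp [h1]
      · by_cases h2 : q.1 = p.1 <;> simp [h1, h2]
    rw [Finset.sum_congr rfl fun q _ => h4 q, sum_pairs]
    field_simp
    norm_num
  rw [Finset.sum_congr rfl fun p _ => e3 p, Finset.sum_const, Finset.card_univ]
  simp [Fintype.card_prod]
  ring

lemma sum_swap_ite {α : Type*} [Fintype α] [DecidableEq α] (f : (α×α) × (α×α) → ℂ) :
    ∑ m : (α×α) × (α×α), (if m.1.1 = m.2.2 ∧ m.1.2 = m.2.1 then f m else 0)
      = ∑ x : α × α, f (x, (x.2, x.1)) := by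
  rw [Fintype.sum_prod_type]
  refine Finset.sum_congr rfl fun x _ => ?_
  rw [Finset.sum_eq_single_of_mem (x.2, x.1) (Finset.mem_univ _)]
  · simp
  · intro y _ hy
    rw [if_neg]
    rintro ⟨h1, h2⟩
    exact hy (Prod.ext h2.symm h1.symm)

lemma sum_diag_ite {α : Type*} [Fintype α] [DecidableEq α] (f : α × α → ℂ) :
    ∑ x : α × α, (if x.1 = x.2 then f x else 0) = ∑ i, f (i, i) := by
  rw [Fintype.sum_prod_type]
  refine Finset.sum_congr rfl fun a _ => ?_
  rw [Finset.sum_eq_single_of_mem a (Finset.mem_univ _)]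
  · simp
  · intro b _ hb
    exact if_neg fun h => hb h.symm

lemma hTD (hone : ∀ p, gq n u p p = 1) :
    ∑ m, Tq n u m * Dq n m = 2 * ((n+1) * n) := by
  have hfact : ∀ p, (∑ i, u p i * (starRingEnd ℂ) (u p i)) = 1 := by
    intro p
    rw [show (∑ i, u p i * (starRingEnd ℂ) (u p i)) = gq n u p p from
      Finset.sum_congr rfl fun i _ => mul_comm _ _]
    exact hone p
  simp only [Dq, mul_add, mul_ite, mul_one, mul_zero]
  rw [Finset.sum_add_distrib]
  have t1 : ∑ m : (Fin n × Fin n) × Fin n × Fin n,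
      (if m.1.1 = m.2.2 ∧ m.1.2 = m.2.1 then Tq n u m else 0) = ((n:ℂ)+1) * n := by
    rw [sum_swap_ite (fun m => Tq n u m)]
    unfold Tq
    rw [Finset.sum_comm]
    have e2 : ∀ p : Fin (n+1) × Fin n, (∑ x : Fin n × Fin n,
        u p x.1 * (starRingEnd ℂ) (u p x.2) * u p x.2 * (starRingEnd ℂ) (u p x.1)) = 1 := by
      intro p
      have e3 : ∀ x : Fin n × Fin n,
          u p x.1 * (starRingEnd ℂ) (u p x.2) * u p x.2 * (starRingEnd ℂ) (u p x.1)
          = (fun i => u p i * (starRingEnd ℂ) (u p i)) x.1 *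
            (fun j => (starRingEnd ℂ) (u p j) * u p j) x.2 := fun x => by ring
      rw [Finset.sum_congr rfl fun x _ => e3 x,
        ← sum_mul_sum' (fun i => u p i * (starRingEnd ℂ) (u p i))
          (fun j => (starRingEnd ℂ) (u p j) * u p j), hfact, one_mul]
      exact hone p
    rw [Finset.sum_congr rfl fun p _ => e2 p, Finset.sum_const, Finset.card_univ]
    simp
  have t2 : ∑ m : (Fin n × Fin n) × Fin n × Fin n,
      (if m.1.1 = m.1.2 ∧ m.2.1 = m.2.2 then Tq n u m else 0) = ((n:ℂ)+1) * n := by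
    have e0 : ∀ m : (Fin n × Fin n) × Fin n × Fin n,
        (if m.1.1 = m.1.2 ∧ m.2.1 = m.2.2 then Tq n u m else 0)
        = (if m.1.1 = m.1.2 then (if m.2.1 = m.2.2 then Tq n u m else 0) else 0) := by
      intro m; by_cases h1 : m.1.1 = m.1.2 <;> by_cases h2 : m.2.1 = m.2.2 <;> simp [h1, h2]
    rw [Finset.sum_congr rfl fun m _ => e0 m, Fintype.sum_prod_type]
    have e1 : ∀ x : Fin n × Fin n, (∑ y : Fin n × Fin n,
        if x.1 = x.2 then (if y.1 = y.2 then Tq n u (x, y) else 0) else 0)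
        = (if x.1 = x.2 then (∑ i, Tq n u (x, (i, i))) else 0) := by
      intro x
      by_cases hx : x.1 = x.2
      · simp only [hx, if_true]
        exact sum_diag_ite (fun y => Tq n u (x, y))
      · simp [hx]
    rw [Finset.sum_congr rfl fun x _ => e1 x, sum_diag_ite (fun x => ∑ i, Tq n u (x, (i,i)))]
    have e2 : ∀ j : Fin n, (∑ i, Tq n u ((j,j),(i,i)))
        = ∑ p : Fin (n+1) × Fin n, u p j * (starRingEnd ℂ) (u p j) := by
      intro j
      unfold Tq
      rw [Finset.sum_comm]
      refine Finset.sum_congr rfl fun p _ => ?_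
      rw [show (∑ i, u p j * (starRingEnd ℂ) (u p j) * u p i * (starRingEnd ℂ) (u p i))
          = (u p j * (starRingEnd ℂ) (u p j)) * ∑ i, u p i * (starRingEnd ℂ) (u p i) from by
        rw [Finset.mul_sum]; exact Finset.sum_congr rfl fun i _ => by ring]
      rw [hfact p, mul_one]
    rw [Finset.sum_congr rfl fun j _ => e2 j, Finset.sum_comm]
    rw [Finset.sum_congr rfl fun p _ => hfact p, Finset.sum_const, Finset.card_univ]
    simp
  rw [t1, t2]; ring

lemma hDconj : ∀ m : (Fin n × Fin n) × Fin n × Fin n, (starRingEnd ℂ) (Dq n m) = Dq n m := by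
  intro m
  unfold Dq
  by_cases h1 : m.1.1 = m.2.2 ∧ m.1.2 = m.2.1 <;> by_cases h2 : m.1.1 = m.1.2 ∧ m.2.1 = m.2.2 <;>
    simp [h1, h2]

lemma sum_diag2_ite {α : Type*} [Fintype α] [DecidableEq α] (f : (α×α) × (α×α) → ℂ) :
    ∑ m : (α×α) × (α×α), (if m.1.1 = m.1.2 ∧ m.2.1 = m.2.2 then f m else 0)
      = ∑ i, ∑ k, f ((i,i),(k,k)) := by
  have e0 : ∀ m : (α×α) × (α×α), (if m.1.1 = m.1.2 ∧ m.2.1 = m.2.2 then f m else 0)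
      = (if m.1.1 = m.1.2 then (if m.2.1 = m.2.2 then f m else 0) else 0) := by
    intro m; by_cases h1 : m.1.1 = m.1.2 <;> by_cases h2 : m.2.1 = m.2.2 <;> simp [h1, h2]
  rw [Finset.sum_congr rfl fun m _ => e0 m, Fintype.sum_prod_type]
  have e1 : ∀ x : α × α, (∑ y : α × α,
      if x.1 = x.2 then (if y.1 = y.2 then f (x, y) else 0) else 0)
      = (if x.1 = x.2 then (∑ i, f (x, (i, i))) else 0) := by
    intro x
    by_cases hx : x.1 = x.2
    · simp only [hx, if_true]
      exact sum_diag_ite (fun y => f (x, y))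
    · simp [hx]
  rw [Finset.sum_congr rfl fun x _ => e1 x, sum_diag_ite (fun x => ∑ i, f (x, (i,i)))]

lemma hDD : ∑ m, Dq n m * Dq n m = 2 * ((n+1) * n) := by
  have e : ∀ m : (Fin n × Fin n) × Fin n × Fin n, Dq n m * Dq n m
      = ((if m.1.1 = m.2.2 ∧ m.1.2 = m.2.1 then (1:ℂ) else 0)
        + (if m.1.1 = m.1.2 ∧ m.2.1 = m.2.2 then (1:ℂ) else 0))
        + 2 * (if (m.1.1 = m.2.2 ∧ m.1.2 = m.2.1) ∧ (m.1.1 = m.1.2 ∧ m.2.1 = m.2.2)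
            then (1:ℂ) else 0) := by
    intro m
    unfold Dq
    by_cases h1 : m.1.1 = m.2.2 ∧ m.1.2 = m.2.1 <;>
      by_cases h2 : m.1.1 = m.1.2 ∧ m.2.1 = m.2.2
    · rw [if_pos h1, if_pos h2, if_pos ⟨h1, h2⟩]; norm_num
    · rw [if_pos h1, if_neg h2, if_neg (fun hc => h2 hc.2)]; norm_num
    · rw [if_neg h1, if_pos h2, if_neg (fun hc => h1 hc.1)]; norm_num
    · rw [if_neg h1, if_neg h2, if_neg (fun hc => h1 hc.1)]; norm_num
  rw [Finset.sum_congr rfl fun m _ => e m, Finset.sum_add_distrib, Finset.sum_add_distrib,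
    ← Finset.mul_sum]
  have s1 : ∑ m : (Fin n × Fin n) × Fin n × Fin n,
      (if m.1.1 = m.2.2 ∧ m.1.2 = m.2.1 then (1:ℂ) else 0) = (n:ℂ) * n := by
    rw [sum_swap_ite (fun _ => (1:ℂ)), Finset.sum_const, Finset.card_univ]
    simp
  have s2 : ∑ m : (Fin n × Fin n) × Fin n × Fin n,
      (if m.1.1 = m.1.2 ∧ m.2.1 = m.2.2 then (1:ℂ) else 0) = (n:ℂ) * n := by
    rw [sum_diag2_ite (fun _ => (1:ℂ))]
    simp
  have s3 : ∑ m : (Fin n × Fin n) × Fin n × Fin n,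
      (if (m.1.1 = m.2.2 ∧ m.1.2 = m.2.1) ∧ (m.1.1 = m.1.2 ∧ m.2.1 = m.2.2)
        then (1:ℂ) else 0) = (n:ℂ) := by
    have e0 : ∀ m : (Fin n × Fin n) × Fin n × Fin n,
        (if (m.1.1 = m.2.2 ∧ m.1.2 = m.2.1) ∧ (m.1.1 = m.1.2 ∧ m.2.1 = m.2.2) then (1:ℂ) else 0)
        = (if m.1.1 = m.2.2 ∧ m.1.2 = m.2.1 then
            (if m.1.1 = m.1.2 ∧ m.2.1 = m.2.2 then (1:ℂ) else 0) else 0) := by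
      intro m
      by_cases h1 : m.1.1 = m.2.2 ∧ m.1.2 = m.2.1 <;>
        by_cases h2 : m.1.1 = m.1.2 ∧ m.2.1 = m.2.2 <;> simp [h1, h2]
    rw [Finset.sum_congr rfl fun m _ => e0 m,
      sum_swap_ite (fun m => if m.1.1 = m.1.2 ∧ m.2.1 = m.2.2 then (1:ℂ) else 0)]
    have e1 : ∀ x : Fin n × Fin n,
        (if x.1 = x.2 ∧ x.2 = x.1 then (1:ℂ) else 0) = (if x.1 = x.2 then (1:ℂ) else 0) := by
      intro x; by_cases hx : x.1 = x.2 <;> simp [hx]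
    rw [Finset.sum_congr rfl fun x _ => e1 x, sum_diag_ite (fun _ => (1:ℂ))]
    simp
  rw [s1, s2, s3]
  ring

lemma hDT (hone : ∀ p, gq n u p p = 1) :
    ∑ m, Dq n m * (starRingEnd ℂ) (Tq n u m) = 2 * ((n+1) * n) := by
  have e : ∀ m, Dq n m * (starRingEnd ℂ) (Tq n u m)
      = (starRingEnd ℂ) (Tq n u m * Dq n m) := by
    intro m; rw [_root_.map_mul, hDconj n m, mul_comm]
  rw [Finset.sum_congr rfl fun m _ => e m, ← _root_.map_sum, hTD n u hone]
  simp [map_ofNat]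

lemma hkey (hd : (n:ℂ) ≠ 0)
    (hone : ∀ p, gq n u p p = 1)
    (hgram : ∀ p q, gq n u p q * gq n u q p
      = if q = p then 1 else if q.1 = p.1 then 0 else (n:ℂ)⁻¹) :
    ∀ m, Tq n u m = Dq n m := by
  have hC : ∑ m, (Tq n u m - Dq n m) * (starRingEnd ℂ) (Tq n u m - Dq n m) = 0 := by
    have e : ∀ m, (Tq n u m - Dq n m) * (starRingEnd ℂ) (Tq n u m - Dq n m)
        = Tq n u m * (starRingEnd ℂ) (Tq n u m) - Tq n u m * Dq n m
          - Dq n m * (starRingEnd ℂ) (Tq n u m) + Dq n m * Dq n m := by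
      intro m; rw [map_sub, hDconj n m]; ring
    rw [Finset.sum_congr rfl fun m _ => e m]
    rw [Finset.sum_add_distrib, Finset.sum_sub_distrib, Finset.sum_sub_distrib,
      hTT n u hd hgram, hTD n u hone, hDT n u hone, hDD n]
    ring
  have hR : ∑ m, Complex.normSq (Tq n u m - Dq n m) = 0 := by
    simp_rw [Complex.mul_conj] at hC
    exact_mod_cast hC
  intro m
  have h0 : Complex.normSq (Tq n u m - Dq n m) = 0 :=
    (Finset.sum_eq_zero_iff_of_nonneg (fun i _ => Complex.normSq_nonneg _)).mp hR m
      (Finset.mem_univ m)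
  exact sub_eq_zero.mp (Complex.normSq_eq_zero.mp h0)

end

theorem mub_sum_eq_trace_mul_add_trace_mul_trace
    (d : ℕ) (ψ : Fin (d + 1) → Fin d → (Fin d → ℂ))
    (hMUB : ∀ a b a' b', ‖star (ψ a b) ⬝ᵥ ψ a' b'‖ =
      if a = a' ∧ b = b' then 1 else if a = a' then 0 else 1 / Real.sqrt d)
    (M N : Matrix (Fin d) (Fin d) ℂ) :
    ∑ a : Fin (d + 1), ∑ b : Fin d,
      (star (ψ a b) ⬝ᵥ (M *ᵥ ψ a b)) * (star (ψ a b) ⬝ᵥ (N *ᵥ ψ a b))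
      = (M * N).trace + M.trace * N.trace := by
  rcases Nat.eq_zero_or_pos d with hd0 | hd0
  · subst hd0
    simp [Matrix.trace]
  have hdC : (d : ℂ) ≠ 0 := Nat.cast_ne_zero.mpr hd0.ne'
  set u : Fin (d+1) × Fin d → Fin d → ℂ := fun p => ψ p.1 p.2 with hu
  -- the dot product in terms of sums
  have hdot : ∀ p q : Fin (d+1) × Fin d, star (ψ p.1 p.2) ⬝ᵥ ψ q.1 q.2 = gq d u p q := by
    intro p q
    simp [gq, dotProduct, Complex.star_def, hu]
  have hconjdot : ∀ p q : Fin (d+1) × Fin d, gq d u q p = (starRingEnd ℂ) (gq d u p q) := by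
    intro p q
    unfold gq
    rw [_root_.map_sum]
    refine Finset.sum_congr rfl fun i _ => ?_
    rw [_root_.map_mul, Complex.conj_conj]
    ring
  -- hone
  have hone : ∀ p : Fin (d+1) × Fin d, gq d u p p = 1 := by
    intro p
    have h2 : gq d u p p = ((∑ i, Complex.normSq (u p i) : ℝ) : ℂ) := by
      unfold gq
      push_cast
      refine Finset.sum_congr rfl fun i _ => ?_
      rw [Complex.normSq_eq_conj_mul_self]
    have hnn : (0:ℝ) ≤ ∑ i, Complex.normSq (u p i) :=
      Finset.sum_nonneg fun i _ => Complex.normSq_nonneg _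
    have h1 := hMUB p.1 p.2 p.1 p.2
    rw [if_pos ⟨rfl, rfl⟩, hdot p p, h2, Complex.norm_real, Real.norm_eq_abs, _root_.abs_of_nonneg hnn] at h1
    rw [h2, h1]
    norm_num
  -- hgram
  have hgram : ∀ p q : Fin (d+1) × Fin d, gq d u p q * gq d u q p
      = if q = p then 1 else if q.1 = p.1 then 0 else (d:ℂ)⁻¹ := by
    intro p q
    by_cases h1 : q = p
    · subst h1; rw [if_pos rfl, hone, one_mul]
    · rw [if_neg h1]
      by_cases h2 : q.1 = p.1
      · rw [if_pos h2]
        have hb : p.2 ≠ q.2 := by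
          intro hb; exact h1 (Prod.ext h2 hb.symm)
        have h3 := hMUB p.1 p.2 q.1 q.2
        rw [if_neg (fun hc => hb hc.2), if_pos h2.symm, hdot p q] at h3
        rw [norm_eq_zero.mp h3, zero_mul]
      · rw [if_neg h2]
        have h3 := hMUB p.1 p.2 q.1 q.2
        rw [if_neg (fun hc => h2 hc.1.symm), if_neg (fun hc => h2 hc.symm), hdot p q] at h3
        rw [hconjdot p q, Complex.mul_conj, ← Complex.sq_norm, h3]
        have h4 : ((1:ℝ)/Real.sqrt d)^2 = (d:ℝ)⁻¹ := by
          rw [div_pow, one_pow, Real.sq_sqrt (Nat.cast_nonneg d), one_div]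
        rw [h4]
        push_cast
        ring
  have hT := hkey d u hdC hone hgram
  -- rewrite the double sum as a sum over pairs
  rw [← Fintype.sum_prod_type (f := fun p : Fin (d+1) × Fin d =>
    (star (ψ p.1 p.2) ⬝ᵥ (M *ᵥ ψ p.1 p.2)) * (star (ψ p.1 p.2) ⬝ᵥ (N *ᵥ ψ p.1 p.2)))]
  have hs : ∀ (A : Matrix (Fin d) (Fin d) ℂ) (p : Fin (d+1) × Fin d),
      star (ψ p.1 p.2) ⬝ᵥ (A *ᵥ ψ p.1 p.2)
      = ∑ x : Fin d × Fin d, (starRingEnd ℂ) (u p x.1) * A x.1 x.2 * u p x.2 := by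
    intro A p
    rw [Fintype.sum_prod_type]
    simp only [dotProduct, mulVec, Pi.star_apply, Complex.star_def, Finset.mul_sum]
    exact Finset.sum_congr rfl fun j _ => Finset.sum_congr rfl fun i _ => by ring
  have hprod : ∀ p : Fin (d+1) × Fin d,
      (star (ψ p.1 p.2) ⬝ᵥ (M *ᵥ ψ p.1 p.2)) * (star (ψ p.1 p.2) ⬝ᵥ (N *ᵥ ψ p.1 p.2))
      = ∑ m : (Fin d × Fin d) × Fin d × Fin d,
          ((starRingEnd ℂ) (u p m.1.1) * M m.1.1 m.1.2 * u p m.1.2) *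
          ((starRingEnd ℂ) (u p m.2.1) * N m.2.1 m.2.2 * u p m.2.2) := by
    intro p
    rw [hs M p, hs N p, sum_mul_sum' (fun x : Fin d × Fin d => (starRingEnd ℂ) (u p x.1) * M x.1 x.2 * u p x.2)
      (fun x : Fin d × Fin d => (starRingEnd ℂ) (u p x.1) * N x.1 x.2 * u p x.2)]
  rw [Finset.sum_congr rfl fun p _ => hprod p, Finset.sum_comm]
  have hswap : ∀ m : (Fin d × Fin d) × Fin d × Fin d,
      (∑ p : Fin (d+1) × Fin d,
        ((starRingEnd ℂ) (u p m.1.1) * M m.1.1 m.1.2 * u p m.1.2) *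
        ((starRingEnd ℂ) (u p m.2.1) * N m.2.1 m.2.2 * u p m.2.2))
      = M m.1.1 m.1.2 * N m.2.1 m.2.2 * Tq d u ((m.1.2, m.1.1), (m.2.2, m.2.1)) := by
    intro m
    unfold Tq
    rw [Finset.mul_sum]
    exact Finset.sum_congr rfl fun p _ => by ring
  rw [Finset.sum_congr rfl fun m _ => hswap m]
  have hfin : ∀ m : (Fin d × Fin d) × Fin d × Fin d,
      M m.1.1 m.1.2 * N m.2.1 m.2.2 * Tq d u ((m.1.2, m.1.1), (m.2.2, m.2.1))
      = (if m.1.1 = m.2.2 ∧ m.1.2 = m.2.1 then M m.1.1 m.1.2 * N m.2.1 m.2.2 else 0)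
      + (if m.1.1 = m.1.2 ∧ m.2.1 = m.2.2 then M m.1.1 m.1.2 * N m.2.1 m.2.2 else 0) := by
    intro m
    rw [hT ((m.1.2, m.1.1), (m.2.2, m.2.1))]
    unfold Dq
    rw [mul_add, mul_ite, mul_one, mul_zero, mul_ite, mul_one, mul_zero]
    congr 1
    · exact if_congr ⟨fun h => ⟨h.2, h.1⟩, fun h => ⟨h.2, h.1⟩⟩ rfl rfl
    · exact if_congr ⟨fun h => ⟨h.1.symm, h.2.symm⟩, fun h => ⟨h.1.symm, h.2.symm⟩⟩ rfl rfl
  rw [Finset.sum_congr rfl fun m _ => hfin m, Finset.sum_add_distrib,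
    sum_swap_ite (fun m : (Fin d × Fin d) × Fin d × Fin d => M m.1.1 m.1.2 * N m.2.1 m.2.2),
    sum_diag2_ite (fun m : (Fin d × Fin d) × Fin d × Fin d => M m.1.1 m.1.2 * N m.2.1 m.2.2)]
  congr 1
  · rw [Fintype.sum_prod_type]
    simp [Matrix.trace, Matrix.diag, Matrix.mul_apply]
  · simp [Matrix.trace, Matrix.diag, Finset.sum_mul_sum]
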